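/- Fix σ > 1/2 and let g : ℝ → ℝ satisfy g(T) > T for all large T. Assume: (i) (quotient formula) ∫_T^{g(T)} |ζ(1/2+it)|² dt / ∫_T^{g(T)} |ζ(σ+it)|² dt = (1/ζ(2σ))·ln T + O(1) as T → ∞; (ii) (t_ν) is a Gram sequence satisfying the Titchmarsh-sum asymptotic. For positive integers x, y, z, n with n ≥ 3 set F = (xⁿ + yⁿ)/zⁿ and K_F = 4π⁵·F/(3·ζ(2σ)⁵), and let E(τ) = (1/τ)·(∫_{K_F·τ}^{g(K_F·τ)} |ζ(σ+it)|² dt)⁵ · (∫_{K_F·τ}^{g(K_F·τ)} |ζ(1/2+it)|² dt)^{−5} · Σ_{ν : K_F·τ ≤ t_ν ≤ 2·K_F·τ} |ζ(1/2 + i t_ν)|²·|ζ(1/2 + i t_{ν+1})|². Then the following are equivalent: (a) for all positive integers x, y, z, n with n ≥ 3, E(τ) does not converge to 1 as τ → ∞; (b) for all positive integers x, y, z, n with n ≥ 3, xⁿ + yⁿ ≠ zⁿ (the Fermat–Wiles theorem). -/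

import Mathlib

open Filter Topology MeasureTheory

/-- |ζ(σ+it)|² -/
noncomputable def zsq (σ : ℝ) (t : ℝ) : ℝ :=
  ‖riemannZeta (↑σ + ↑t * Complex.I)‖ ^ 2

/-- Riemann–Siegel theta function θ(t) = Im log Γ(1/4 + it/2) − (t/2)·ln π. -/
noncomputable def RStheta (t : ℝ) : ℝ :=
  (Complex.log (Complex.Gamma (1/4 + (↑t/2) * Complex.I))).im - (t/2) * Real.log Real.pi

/-- A Gram sequence: strictly increasing positive reals tending to ∞ with θ(t_ν) = π·ν. -/
def IsGramSeq (tν : ℕ → ℝ) : Prop :=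
  StrictMono tν ∧ (∀ ν : ℕ, 1 ≤ ν → 0 < tν ν) ∧ Filter.Tendsto tν Filter.atTop Filter.atTop ∧
    ∀ ν : ℕ, 1 ≤ ν → RStheta (tν ν) = Real.pi * ν

/-- Titchmarsh sum Σ_{T ≤ t_ν ≤ 2T} |ζ(1/2+it_ν)|²·|ζ(1/2+it_{ν+1})|². -/
noncomputable def TitchSum (tν : ℕ → ℝ) (T : ℝ) : ℝ :=
  ∑' ν : ℕ, if T ≤ tν ν ∧ tν ν ≤ 2 * T then zsq (1/2) (tν ν) * zsq (1/2) (tν (ν+1)) else 0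

/-- The Titchmarsh-sum asymptotic (Moser 1991):
Σ_{T ≤ t_ν ≤ 2T} |ζ(1/2+it_ν)|²|ζ(1/2+it_{ν+1})|² = (3/(4π⁵))·T·ln⁵T·(1+O(1/ln T)). -/
def TitchAsymp (tν : ℕ → ℝ) : Prop :=
  ∃ C : ℝ, ∀ᶠ T in Filter.atTop,
    |TitchSum tν T / (3 / (4 * Real.pi ^ 5) * T * Real.log T ^ 5) - 1| ≤ C / Real.log T

lemma tendsto_one_of_log_bound {f : ℝ → ℝ} {C : ℝ}
    (h : ∀ᶠ T in atTop, |f T - 1| ≤ C / Real.log T) :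
    Tendsto f atTop (𝓝 1) := by
  have h0 : Tendsto (fun T : ℝ => C / Real.log T) atTop (𝓝 0) :=
    Tendsto.div_atTop tendsto_const_nhds Real.tendsto_log_atTop
  have hlo : Tendsto (fun T : ℝ => 1 - C / Real.log T) atTop (𝓝 1) := by
    simpa using tendsto_const_nhds.sub h0
  have hhi : Tendsto (fun T : ℝ => 1 + C / Real.log T) atTop (𝓝 1) := by
    simpa using tendsto_const_nhds.add h0
  refine tendsto_of_tendsto_of_tendsto_of_le_of_le' hlo hhi ?_ ?_
  · filter_upwards [h] with T hT
    have := abs_le.mp hT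
    linarith [this.1]
  · filter_upwards [h] with T hT
    have := abs_le.mp hT
    linarith [this.2]

lemma tendsto_ratio_log {R : ℝ → ℝ} {c C : ℝ} (hc : 0 < c)
    (h : ∀ᶠ T in atTop, |R T - c⁻¹ * Real.log T| ≤ C) :
    Tendsto (fun T => R T / (c⁻¹ * Real.log T)) atTop (𝓝 1) := by
  apply tendsto_one_of_log_bound (C := C * c)
  have hlog : ∀ᶠ T in atTop, 1 ≤ Real.log T :=
    Real.tendsto_log_atTop.eventually_ge_atTop 1
  filter_upwards [h, hlog] with T hT hL
  have hL0 : 0 < Real.log T := by linarith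
  have hd : c⁻¹ * Real.log T ≠ 0 := by positivity
  have : R T / (c⁻¹ * Real.log T) - 1 = (R T - c⁻¹ * Real.log T) / (c⁻¹ * Real.log T) := by
    field_simp
  rw [this, abs_div, abs_of_pos (by positivity : (0:ℝ) < c⁻¹ * Real.log T)]
  rw [div_le_div_iff₀ (by positivity) hL0]
  calc |R T - c⁻¹ * Real.log T| * Real.log T ≤ C * Real.log T :=
        mul_le_mul_of_nonneg_right hT hL0.le
    _ = C * c * (c⁻¹ * Real.log T) := by field_simp

lemma main_tendsto {u v S : ℝ → ℝ} {c K C C' : ℝ} (hc : 0 < c) (hK : 0 < K)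
    (hq : ∀ᶠ T in atTop, |v T / u T - c⁻¹ * Real.log T| ≤ C)
    (ht : ∀ᶠ T in atTop,
      |S T / (3 / (4 * Real.pi ^ 5) * T * Real.log T ^ 5) - 1| ≤ C' / Real.log T) :
    Tendsto (fun τ : ℝ => (1/τ) * (u (K*τ))^5 * ((v (K*τ))^5)⁻¹ * S (K*τ)) atTop
      (𝓝 (3 / (4 * Real.pi ^ 5) * K * c ^ 5)) := by
  set a : ℝ := 3 / (4 * Real.pi ^ 5) with ha_def
  have hπ : (0:ℝ) < Real.pi := Real.pi_pos
  have ha : 0 < a := by positivity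
  have hR : Tendsto (fun T => (v T / u T) / (c⁻¹ * Real.log T)) atTop (𝓝 1) :=
    tendsto_ratio_log hc hq
  have hA : Tendsto (fun T => (c⁻¹ * Real.log T) / (v T / u T)) atTop (𝓝 1) := by
    have := hR.inv₀ one_ne_zero
    simpa [inv_div] using this
  have hB : Tendsto (fun T => S T / (a * T * Real.log T ^ 5)) atTop (𝓝 1) :=
    tendsto_one_of_log_bound ht
  have hKτ : Tendsto (fun τ : ℝ => K * τ) atTop atTop :=
    Tendsto.const_mul_atTop hK tendsto_id
  have hlim : Tendsto (fun τ : ℝ =>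
      ((c⁻¹ * Real.log (K*τ)) / (v (K*τ) / u (K*τ)))^5
        * (S (K*τ) / (a * (K*τ) * Real.log (K*τ) ^ 5)) * (a * K * c ^ 5)) atTop
      (𝓝 (a * K * c ^ 5)) := by
    have := (((hA.comp hKτ).pow 5).mul (hB.comp hKτ)).mul_const (a * K * c ^ 5)
    simpa using this
  refine Tendsto.congr' ?_ hlim
  have hlog : ∀ᶠ τ in atTop, 1 ≤ Real.log (K*τ) :=
    hKτ.eventually (Real.tendsto_log_atTop.eventually_ge_atTop 1)
  filter_upwards [hlog, eventually_gt_atTop (0:ℝ)] with τ hL hτ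
  have hL0 : Real.log (K*τ) ≠ 0 := by linarith
  set L := Real.log (K*τ)
  set U := u (K*τ); set V := v (K*τ); set s := S (K*τ)
  rcases eq_or_ne U 0 with h | hU
  · simp [h, div_zero, zero_pow]
  rcases eq_or_ne V 0 with h | hV
  · simp [h, zero_div, div_zero, zero_pow]
  have hτ0 : τ ≠ 0 := ne_of_gt hτ
  field_simp

lemma zeta_re_pos' {x : ℝ} (hx : 1 < x) : 0 < (riemannZeta x).re := by
  have hs : 1 < Complex.re x := by simpa
  rw [zeta_eq_tsum_one_div_nat_cpow hs]
  have key : ∀ n : ℕ, (1 / (n : ℂ) ^ (x : ℂ)) = ((1 / (n : ℝ) ^ x : ℝ) : ℂ) := by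
    intro n
    rw [Complex.ofReal_div, Complex.ofReal_one, Complex.ofReal_cpow (by positivity)]
    norm_num
  simp_rw [key]
  rw [← Complex.ofReal_tsum, Complex.ofReal_re]
  have hsum : Summable (fun n : ℕ => 1 / (n : ℝ) ^ x) :=
    Real.summable_one_div_nat_rpow.mpr hx
  refine Summable.tsum_pos hsum (fun n => by positivity) 1 ?_
  norm_num

theorem zeta_equivalent_FLT_first (σ : ℝ) (hσ : 1/2 < σ) (g : ℝ → ℝ)
    (hg : ∀ᶠ T in atTop, T < g T)
    (hquot : ∃ C : ℝ, ∀ᶠ T in atTop,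
      |(∫ t in T..(g T), zsq (1/2) t) / (∫ t in T..(g T), zsq σ t) -
        (1 / (riemannZeta (2 * (σ:ℂ))).re) * Real.log T| ≤ C)
    (tν : ℕ → ℝ) (hgram : IsGramSeq tν) (htitch : TitchAsymp tν) :
    ((∀ x y z n : ℕ, 0 < x → 0 < y → 0 < z → 3 ≤ n →
      ¬ Tendsto (fun τ : ℝ =>
        (1/τ) *
        ((∫ t in (4 * Real.pi ^ 5 * (((x:ℝ)^n + (y:ℝ)^n) / (z:ℝ)^n) / (3 * (riemannZeta (2 * (σ:ℂ))).re ^ 5) * τ)..(g (4 * Real.pi ^ 5 * (((x:ℝ)^n + (y:ℝ)^n) / (z:ℝ)^n) / (3 * (riemannZeta (2 * (σ:ℂ))).re ^ 5) * τ)), zsq σ t) ^ 5) *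
        (((∫ t in (4 * Real.pi ^ 5 * (((x:ℝ)^n + (y:ℝ)^n) / (z:ℝ)^n) / (3 * (riemannZeta (2 * (σ:ℂ))).re ^ 5) * τ)..(g (4 * Real.pi ^ 5 * (((x:ℝ)^n + (y:ℝ)^n) / (z:ℝ)^n) / (3 * (riemannZeta (2 * (σ:ℂ))).re ^ 5) * τ)), zsq (1/2) t) ^ 5)⁻¹) *
        TitchSum tν (4 * Real.pi ^ 5 * (((x:ℝ)^n + (y:ℝ)^n) / (z:ℝ)^n) / (3 * (riemannZeta (2 * (σ:ℂ))).re ^ 5) * τ))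
        atTop (nhds 1))
    ↔ (∀ x y z n : ℕ, 0 < x → 0 < y → 0 < z → 3 ≤ n → x^n + y^n ≠ z^n)) := by
  obtain ⟨C, hquot⟩ := hquot
  obtain ⟨C', htitch⟩ := htitch
  have hc : 0 < (riemannZeta (2 * (σ:ℂ))).re := by
    have h2 : (2 * (σ:ℂ)) = ((2*σ : ℝ) : ℂ) := by push_cast; ring
    rw [h2]
    exact zeta_re_pos' (by linarith)
  set c := (riemannZeta (2 * (σ:ℂ))).re with hc_def
  have key : ∀ x y z n : ℕ, 0 < x → 0 < y → 0 < z → 3 ≤ n →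
      Tendsto (fun τ : ℝ =>
        (1/τ) *
        ((∫ t in (4 * Real.pi ^ 5 * (((x:ℝ)^n + (y:ℝ)^n) / (z:ℝ)^n) / (3 * c ^ 5) * τ)..(g (4 * Real.pi ^ 5 * (((x:ℝ)^n + (y:ℝ)^n) / (z:ℝ)^n) / (3 * c ^ 5) * τ)), zsq σ t) ^ 5) *
        (((∫ t in (4 * Real.pi ^ 5 * (((x:ℝ)^n + (y:ℝ)^n) / (z:ℝ)^n) / (3 * c ^ 5) * τ)..(g (4 * Real.pi ^ 5 * (((x:ℝ)^n + (y:ℝ)^n) / (z:ℝ)^n) / (3 * c ^ 5) * τ)), zsq (1/2) t) ^ 5)⁻¹) *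
        TitchSum tν (4 * Real.pi ^ 5 * (((x:ℝ)^n + (y:ℝ)^n) / (z:ℝ)^n) / (3 * c ^ 5) * τ))
        atTop (𝓝 (((x:ℝ)^n + (y:ℝ)^n) / (z:ℝ)^n)) := by
    intro x y z n hx hy hz hn
    have hπ : (0:ℝ) < Real.pi := Real.pi_pos
    have hx' : (0:ℝ) < (x:ℝ) := by exact_mod_cast hx
    have hy' : (0:ℝ) < (y:ℝ) := by exact_mod_cast hy
    have hz' : (0:ℝ) < (z:ℝ) := by exact_mod_cast hz
    set F : ℝ := ((x:ℝ)^n + (y:ℝ)^n) / (z:ℝ)^n with hF_def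
    have hF : 0 < F := by positivity
    set K : ℝ := 4 * Real.pi ^ 5 * F / (3 * c ^ 5) with hK_def
    have hK : 0 < K := by positivity
    have hq : ∀ᶠ T in atTop,
        |(∫ t in T..(g T), zsq (1/2) t) / (∫ t in T..(g T), zsq σ t) -
          c⁻¹ * Real.log T| ≤ C := by
      filter_upwards [hquot] with T hT
      simpa [one_div] using hT
    have hmain := main_tendsto (u := fun T => ∫ t in T..(g T), zsq σ t)
      (v := fun T => ∫ t in T..(g T), zsq (1/2) t) (S := TitchSum tν) hc hK hq htitch
    have hFK : 3 / (4 * Real.pi ^ 5) * K * c ^ 5 = F := by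
      rw [hK_def]
      field_simp
    rw [hFK] at hmain
    exact hmain
  constructor
  · intro h x y z n hx hy hz hn hEq
    refine h x y z n hx hy hz hn ?_
    have hE := key x y z n hx hy hz hn
    have hz' : ((z:ℝ))^n ≠ 0 := by
      have : (0:ℝ) < (z:ℝ) := by exact_mod_cast hz
      positivity
    have hF1 : ((x:ℝ)^n + (y:ℝ)^n) / (z:ℝ)^n = 1 := by
      rw [div_eq_one_iff_eq hz']
      exact_mod_cast hEq
    exact hE.mono_right (le_of_eq (by rw [hF1]))
  · intro h x y z n hx hy hz hn hT
    have hE := key x y z n hx hy hz hn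
    have h1F := tendsto_nhds_unique hT hE
    have hz' : ((z:ℝ))^n ≠ 0 := by
      have : (0:ℝ) < (z:ℝ) := by exact_mod_cast hz
      positivity
    have hnat : x^n + y^n = z^n := by
      have h2 := (div_eq_one_iff_eq hz').mp h1F.symm
      exact_mod_cast h2
    exact h x y z n hx hy hz hn hnat
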